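/- A matrix A ∈ ℂ^{s×n} satisfies spark(A) ≥ 2k+1 if and only if every k-sparse vector x ∈ ℂⁿ is uniquely determined by A x among k-sparse vectors (i.e., A is injective on the set of k-sparse vectors). -/

import Mathlib

open Matrix

/-- A matrix A satisfies spark(A) ≥ 2k+1 (i.e. no nonzero 2k-sparse vector lies in its
kernel) if and only if A is injective on the set of k-sparse vectors. -/
theorem spark_iff_injective_on_sparse
    {s n k : ℕ} (A : Matrix (Fin s) (Fin n) ℂ) :
    (∀ x : Fin n → ℂ, {i | x i ≠ 0}.ncard ≤ 2 * k → A *ᵥ x = 0 → x = 0) ↔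
    (∀ x y : Fin n → ℂ, {i | x i ≠ 0}.ncard ≤ k → {i | y i ≠ 0}.ncard ≤ k →
      A *ᵥ x = A *ᵥ y → x = y) := by
  constructor
  · intro h x y hx hy hxy
    have hs : A *ᵥ (x - y) = 0 := by
      rw [Matrix.mulVec_sub, hxy, sub_self]
    have hcard : {i | (x - y) i ≠ 0}.ncard ≤ 2 * k := by
      have hsub : {i | (x - y) i ≠ 0} ⊆ {i | x i ≠ 0} ∪ {i | y i ≠ 0} := by
        intro i hi
        by_contra hc
        simp only [Set.mem_union, Set.mem_setOf_eq, not_or, not_not] at hc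
        exact hi (by simp [hc.1, hc.2])
      calc {i | (x - y) i ≠ 0}.ncard
          ≤ ({i | x i ≠ 0} ∪ {i | y i ≠ 0}).ncard :=
            Set.ncard_le_ncard hsub (Set.toFinite _)
        _ ≤ {i | x i ≠ 0}.ncard + {i | y i ≠ 0}.ncard := Set.ncard_union_le _ _
        _ ≤ 2 * k := by omega
    exact sub_eq_zero.mp (h _ hcard hs)
  · intro h x hx hAx
    set S := {i | x i ≠ 0}.toFinset with hS
    have hScard : S.card ≤ 2 * k := by
      rw [hS, ← Set.ncard_eq_toFinset_card']
      exact hx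
    obtain ⟨T, hTS, hTcard⟩ := Finset.exists_subset_card_eq (s := S) (n := min k S.card)
      (min_le_right _ _)
    set x₁ : Fin n → ℂ := fun i => if i ∈ T then x i else 0 with hx₁
    set x₂ : Fin n → ℂ := fun i => if i ∈ T then 0 else -x i with hx₂
    have hdiff : x₁ - x₂ = x := by
      funext i
      by_cases hi : i ∈ T <;> simp [hx₁, hx₂, hi]
    have hc1 : {i | x₁ i ≠ 0}.ncard ≤ k := by
      have hsub : {i | x₁ i ≠ 0} ⊆ (T : Set (Fin n)) := by
        intro i hi
        by_contra hc
        exact hi (by simp only [hx₁]; rw [if_neg (by simpa using hc)])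
      calc {i | x₁ i ≠ 0}.ncard ≤ (T : Set (Fin n)).ncard :=
            Set.ncard_le_ncard hsub (Set.toFinite _)
        _ = T.card := Set.ncard_coe_finset _
        _ ≤ k := by omega
    have hc2 : {i | x₂ i ≠ 0}.ncard ≤ k := by
      have hsub : {i | x₂ i ≠ 0} ⊆ ((S \ T : Finset (Fin n)) : Set (Fin n)) := by
        intro i hi
        simp only [Set.mem_setOf_eq, hx₂] at hi
        by_cases hT : i ∈ T
        · simp [hT] at hi
        · simp only [hT, if_false, ne_eq, neg_eq_zero] at hi
          simp only [Finset.coe_sdiff, Set.mem_diff, Finset.mem_coe]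
          exact ⟨by rw [hS]; simpa using hi, hT⟩
      have hsd : (S \ T).card = S.card - T.card := Finset.card_sdiff_of_subset hTS
      calc {i | x₂ i ≠ 0}.ncard ≤ ((S \ T : Finset (Fin n)) : Set (Fin n)).ncard :=
            Set.ncard_le_ncard hsub (Set.toFinite _)
        _ = (S \ T).card := Set.ncard_coe_finset _
        _ ≤ k := by omega
    have hAeq : A *ᵥ x₁ = A *ᵥ x₂ := by
      have : A *ᵥ (x₁ - x₂) = 0 := by rw [hdiff]; exact hAx
      rw [Matrix.mulVec_sub] at this
      exact sub_eq_zero.mp this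
    have := h _ _ hc1 hc2 hAeq
    rw [← hdiff, this, sub_self]
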